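/- Let G be a connected graph, A, A' ⊆ G non-empty regular sets, and B ⊆ ∂A ∩ ∂A'. Suppose A and A' each have consistent complement relative to B, and there is a neighborhood V of B with A ∩ V = A' ∩ V. Then σ_B(A) = σ_B(A'). Moreover, every component C of G \ A with closure(C) ∩ B ≠ ∅ is also a component of G \ A'. -/

import Mathlib

open Set Topology

/-- A subset of a space is *regular* if it is closed and has finitely many connected
components, each of which is non-degenerate. -/
def IsRegularSet {G : Type*} [TopologicalSpace G] (A : Set G) : Prop :=
  IsClosed A ∧ {C : Set G | ∃ x ∈ A, C = connectedComponentIn A x}.Finite ∧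
    ∀ x ∈ A, (connectedComponentIn A x).Nontrivial

/-- A point of a graph is *ordinary* (neither a branch point nor an endpoint) if it has an
open neighborhood homeomorphic to an open interval. -/
def IsOrdinaryPoint {G : Type*} [TopologicalSpace G] (x : G) : Prop :=
  ∃ U : Set G, IsOpen U ∧ x ∈ U ∧ Nonempty (U ≃ₜ Set.Ioo (0 : ℝ) 1)

/-- A topological space is a *graph* if it is a finite union of arcs which intersect
at most in endpoints. -/
def IsGraphSpace (G : Type*) [TopologicalSpace G] : Prop :=
  ∃ (n : ℕ) (f : Fin n → unitInterval → G),
    (∀ i, Continuous (f i) ∧ Function.Injective (f i)) ∧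
    (⋃ i, Set.range (f i)) = Set.univ ∧
    ∀ i j, i ≠ j →
      Set.range (f i) ∩ Set.range (f j) ⊆ ({f i 0, f i 1} : Set G) ∩ {f j 0, f j 1}

/-- A subset of a space is a *graph* if it is a finite union of arcs which intersect
at most in endpoints. -/
def IsGraphSet {E : Type*} [TopologicalSpace E] (G : Set E) : Prop :=
  ∃ (n : ℕ) (f : Fin n → unitInterval → E),
    (∀ i, Continuous (f i) ∧ Function.Injective (f i)) ∧
    G = ⋃ i, Set.range (f i) ∧
    ∀ i j, i ≠ j →
      Set.range (f i) ∩ Set.range (f j) ⊆ ({f i 0, f i 1} : Set E) ∩ {f j 0, f j 1}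

/-- `φ` restricted to `A` is a homeomorphism onto `B`. -/
def MapsHomeoOnto {F G : Type*} [TopologicalSpace F] [TopologicalSpace G]
    (φ : F → G) (A : Set F) (B : Set G) : Prop :=
  φ '' A = B ∧ Topology.IsEmbedding (A.restrict φ)

/-- A *simple fold* on `G`, with pieces `F1, F2, F3` of `F` and projection `φ : F → G`,
satisfying properties (F1)-(F5). -/
def IsSimpleFold {F G : Type*} [TopologicalSpace F] [TopologicalSpace G]
    (φ : F → G) (F1 F2 F3 : Set F) : Prop :=
  Continuous φ ∧ F1 ∪ F2 ∪ F3 = Set.univ ∧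
  -- (F1)
  ((φ '' F1).Nonempty ∧ (φ '' F2).Nonempty ∧ (φ '' F3).Nonempty) ∧
  (IsRegularSet (φ '' F1) ∧ IsRegularSet (φ '' F2) ∧ IsRegularSet (φ '' F3)) ∧
  -- (F2)
  (φ '' F1) ∪ (φ '' F3) = Set.univ ∧ (φ '' F2) = (φ '' F1) ∩ (φ '' F3) ∧
  -- (F3)
  closure ((φ '' F1) \ (φ '' F2)) ∩ closure ((φ '' F3) \ (φ '' F2)) = ∅ ∧
  -- (F4)
  (MapsHomeoOnto φ F1 (φ '' F1) ∧ MapsHomeoOnto φ F2 (φ '' F2) ∧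
    MapsHomeoOnto φ F3 (φ '' F3)) ∧
  -- (F5)
  frontier (φ '' F1) = φ '' (F1 ∩ F2) ∧ frontier (φ '' F3) = φ '' (F2 ∩ F3) ∧
  F1 ∩ F3 = ∅

/-- `S` separates `A` from `B` within `Y`: the complement `Y \ S` is the union of two
disjoint sets, relatively open in `Y \ S`, containing `A` and `B` respectively. -/
def SeparatesWithin {E : Type*} [TopologicalSpace E] (Y S A B : Set E) : Prop :=
  ∃ U V : Set E,
    U ∪ V = Y \ S ∧ U ∩ V = ∅ ∧ A ⊆ U ∧ B ⊆ V ∧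
    (∃ U', IsOpen U' ∧ U = (Y \ S) ∩ U') ∧ (∃ V', IsOpen V' ∧ V = (Y \ S) ∩ V')

/-- `A` has *consistent complement relative to* `B`: for each component `C` of the
complement of `A`, either `∂C ⊆ B` or `∂C ∩ B = ∅`. -/
def ConsistentComplement {G : Type*} [TopologicalSpace G] (A B : Set G) : Prop :=
  ∀ x ∉ A, frontier (connectedComponentIn Aᶜ x) ⊆ B ∨
    frontier (connectedComponentIn Aᶜ x) ∩ B = ∅

/-- The *`A` side of `B`*, `σ_B(A)`: the closure of the union of all components of
`G \ B` meeting `A`. -/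
def sideOf {G : Type*} [TopologicalSpace G] (B A : Set G) : Set G :=
  closure (⋃ x ∈ {x : G | x ∉ B ∧ (connectedComponentIn Bᶜ x ∩ A).Nonempty},
    connectedComponentIn Bᶜ x)

/-- A subset of `G × [0,1]` is *straight* if it is closed, the projection is injective on
it, and its projection is regular. -/
def IsStraight {G : Type*} [TopologicalSpace G] (S : Set (G × unitInterval)) : Prop :=
  IsClosed S ∧ Set.InjOn Prod.fst S ∧ IsRegularSet (Prod.fst '' S)

/-- The *end set* of a straight set. -/
def endSet {G : Type*} [TopologicalSpace G] (S : Set (G × unitInterval)) :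
    Set (G × unitInterval) :=
  S ∩ Prod.fst ⁻¹' (frontier (Prod.fst '' S))

/-- A *stairwell structure* of height `k` for `S ⊆ G × [0,1]`, given by the pieces
`Sp 1, …, Sp k` with end set decompositions `E(Sp i) = α i ∪ β i`. -/
def IsStairwell {G : Type*} [TopologicalSpace G]
    (Sp α β : ℕ → Set (G × unitInterval)) (k : ℕ) (S : Set (G × unitInterval)) : Prop :=
  1 ≤ k ∧
  -- (S1)
  (∀ i ∈ Set.Icc 1 k, (Sp i).Nonempty ∧ IsStraight (Sp i)) ∧
  S = ⋃ i ∈ Set.Icc 1 k, Sp i ∧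
  -- (S2)
  (∀ i ∈ Set.Icc 1 k, endSet (Sp i) = α i ∪ β i ∧ α i ∩ β i = ∅ ∧
    (α i).Finite ∧ (β i).Finite) ∧
  α 1 = ∅ ∧ β k = ∅ ∧ (∀ i, 1 ≤ i → i < k → β i = α (i + 1)) ∧
  -- (S3)
  (∀ i, 1 ≤ i → i < k → ∃ V : Set G, IsOpen V ∧ Prod.fst '' β i ⊆ V ∧
    Prod.fst '' Sp i ∩ V = Prod.fst '' Sp (i + 1) ∩ V) ∧
  -- (S4)
  (∀ i ∈ Set.Icc 1 k, ConsistentComplement (Prod.fst '' Sp i) (Prod.fst '' α i) ∧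
    ConsistentComplement (Prod.fst '' Sp i) (Prod.fst '' β i)) ∧
  -- (S5)
  (∀ i ∈ Set.Icc 2 k, ∀ p ∈ α i, IsOrdinaryPoint p.1) ∧
  (∀ i j, 2 ≤ i → i < j → j ≤ k → Prod.fst '' α i ∩ Prod.fst '' α j = ∅)

/-- A *broken stairwell structure* of height `k` with a pit at level `i0`. -/
def IsBrokenStairwell {G : Type*} [TopologicalSpace G]
    (Sp α β : ℕ → Set (G × unitInterval)) (γ P1 P2 : Set (G × unitInterval))
    (k i0 : ℕ) (S : Set (G × unitInterval)) : Prop :=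
  1 ≤ k ∧ 1 ≤ i0 ∧ i0 ≤ k ∧
  -- (S1')
  (∀ i ∈ Set.Icc 1 k, (Sp i).Nonempty ∧ IsStraight (Sp i)) ∧
  P1.Nonempty ∧ IsStraight P1 ∧ P2.Nonempty ∧ IsStraight P2 ∧
  S = (⋃ i ∈ Set.Icc 1 k, Sp i) ∪ P1 ∪ P2 ∧
  -- (S2')
  (∀ i ∈ Set.Icc 1 k, i ≠ i0 → endSet (Sp i) = α i ∪ β i) ∧
  endSet (Sp i0) = α i0 ∪ β i0 ∪ γ ∧
  (∀ i ∈ Set.Icc 1 k, α i ∩ β i = ∅ ∧ (α i).Finite ∧ (β i).Finite) ∧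
  γ.Finite ∧ α i0 ∩ γ = ∅ ∧ β i0 ∩ γ = ∅ ∧
  α 1 = ∅ ∧ β k = ∅ ∧ (∀ i, 1 ≤ i → i < k → β i = α (i + 1)) ∧
  endSet P2 = endSet P1 ∪ γ ∧ endSet P1 ∩ γ = ∅ ∧
  -- (S3')
  (∀ i, 1 ≤ i → i < k → ∃ V : Set G, IsOpen V ∧ Prod.fst '' β i ⊆ V ∧
    Prod.fst '' Sp i ∩ V = Prod.fst '' Sp (i + 1) ∩ V) ∧
  (∃ V : Set G, IsOpen V ∧ Prod.fst '' endSet P1 ⊆ V ∧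
    Prod.fst '' P1 ∩ V = Prod.fst '' P2 ∩ V) ∧
  (∃ W : Set G, IsOpen W ∧ Prod.fst '' γ ⊆ W ∧
    Prod.fst '' P2 ∩ W = Prod.fst '' Sp i0 ∩ W) ∧
  -- (S4')
  (∀ i ∈ Set.Icc 1 k, ConsistentComplement (Prod.fst '' Sp i) (Prod.fst '' α i) ∧
    ConsistentComplement (Prod.fst '' Sp i) (Prod.fst '' β i)) ∧
  ConsistentComplement (Prod.fst '' Sp i0) (Prod.fst '' γ) ∧
  ConsistentComplement (Prod.fst '' P2) (Prod.fst '' endSet P1) ∧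
  ConsistentComplement (Prod.fst '' P2) (Prod.fst '' γ) ∧
  -- (S5')
  (∀ i ∈ Set.Icc 2 k, ∀ p ∈ α i, IsOrdinaryPoint p.1) ∧
  (∀ p ∈ endSet P1, IsOrdinaryPoint p.1) ∧ (∀ p ∈ γ, IsOrdinaryPoint p.1) ∧
  (∀ i j, 2 ≤ i → i < j → j ≤ k → Prod.fst '' α i ∩ Prod.fst '' α j = ∅) ∧
  (∀ i ∈ Set.Icc 2 k, Prod.fst '' α i ∩ Prod.fst '' endSet P1 = ∅ ∧
    Prod.fst '' α i ∩ Prod.fst '' γ = ∅) ∧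
  Prod.fst '' endSet P1 ∩ Prod.fst '' γ = ∅ ∧
  -- (S6')
  Prod.fst '' α i0 ∩ Prod.fst '' (P1 ∪ P2) = ∅

/-- A compactum is *hereditarily indecomposable* if every non-degenerate subcontinuum is
indecomposable, i.e. is not the union of two proper subcontinua. -/
def HereditarilyIndecomposable (X : Type*) [TopologicalSpace X] : Prop :=
  ∀ K : Set X, IsCompact K → IsConnected K → K.Nontrivial →
    ¬ ∃ A B : Set X, IsCompact A ∧ IsConnected A ∧ IsCompact B ∧ IsConnected B ∧
      A ∪ B = K ∧ A ≠ K ∧ B ≠ K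

/-- A continuum is *arc-like* if for every `ε > 0` it admits an `ε`-map onto `[0,1]`. -/
def ArcLike (X : Type*) [MetricSpace X] : Prop :=
  ∀ ε > (0 : ℝ), ∃ f : X → unitInterval, Continuous f ∧ Function.Surjective f ∧
    ∀ y, Metric.diam (f ⁻¹' {y}) < ε

/-- A continuum has *span zero* if every subcontinuum `Z ⊆ X × X` with
`π₁(Z) ⊆ π₂(Z)` meets the diagonal. -/
def SpanZero (X : Type*) [TopologicalSpace X] : Prop :=
  ∀ Z : Set (X × X), IsCompact Z → IsConnected Z →
    Prod.fst '' Z ⊆ Prod.snd '' Z → ∃ x, (x, x) ∈ Z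

/-- A preconnected set meeting both `t` and its complement meets the frontier of `t`. -/
lemma aux_inter_frontier {X : Type*} [TopologicalSpace X] {s t : Set X} (hs : IsPreconnected s)
    (h1 : (s ∩ t).Nonempty) (h2 : (s \ t).Nonempty) : (s ∩ frontier t).Nonempty := by
  by_contra h
  rw [Set.not_nonempty_iff_eq_empty] at h
  have hfr : ∀ z ∈ s, z ∉ frontier t := by
    intro z hz hzf
    have : z ∈ s ∩ frontier t := ⟨hz, hzf⟩
    simp [h] at this
  have hsub : s ⊆ interior t ∪ (closure t)ᶜ := by
    intro z hz
    by_cases hzc : z ∈ closure t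
    · by_cases hzi : z ∈ interior t
      · exact Or.inl hzi
      · exact absurd ⟨hzc, hzi⟩ (hfr z hz)
    · exact Or.inr hzc
  have hU : (s ∩ interior t).Nonempty := by
    obtain ⟨y, hys, hyt⟩ := h1
    rcases hsub hys with h' | h'
    · exact ⟨y, hys, h'⟩
    · exact absurd (subset_closure hyt) h'
  have hV : (s ∩ (closure t)ᶜ).Nonempty := by
    obtain ⟨y, hys, hyt⟩ := h2
    rcases hsub hys with h' | h'
    · exact absurd (interior_subset h') hyt
    · exact ⟨y, hys, h'⟩
  obtain ⟨z, _, hz1, hz2⟩ := hs _ _ isOpen_interior isClosed_closure.isOpen_compl hsub hU hV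
  exact hz2 (subset_closure (interior_subset hz1))

/-- The frontier of a component of an open set avoids the open set. -/
lemma aux_frontier_ccIn {X : Type*} [TopologicalSpace X] [LocallyConnectedSpace X] {O : Set X} (hO : IsOpen O)
    (x : X) : frontier (connectedComponentIn O x) ⊆ Oᶜ := by
  intro z hz
  by_contra hzO
  rw [Set.notMem_compl_iff] at hzO
  have hCopen : IsOpen (connectedComponentIn O x) := hO.connectedComponentIn
  have hzC : z ∉ connectedComponentIn O x := by
    intro hmem
    rw [hCopen.frontier_eq] at hz
    exact hz.2 hmem
  have hN : IsOpen (connectedComponentIn O z) := hO.connectedComponentIn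
  have hzN : z ∈ connectedComponentIn O z := mem_connectedComponentIn hzO
  obtain ⟨y, hyN, hyC⟩ := mem_closure_iff.mp (frontier_subset_closure hz) _ hN hzN
  have h1 := connectedComponentIn_eq hyN
  have h2 := connectedComponentIn_eq hyC
  exact hzC (by rw [h2, ← h1]; exact hzN)

/-- A preconnected set avoiding `B` meeting an open set whose frontier lies in `B`
is contained in the open set. -/
lemma aux_subset_of_preconnected {X : Type*} [TopologicalSpace X] {C D B : Set X} (hC : IsOpen C)
    (hfr : closure C \ C ⊆ B) (hD : IsPreconnected D) (hDB : ∀ z ∈ D, z ∉ B)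
    (hDC : (D ∩ C).Nonempty) : D ⊆ C := by
  have hsub : D ⊆ C ∪ (closure C)ᶜ := by
    intro z hz
    by_cases h1 : z ∈ C
    · exact Or.inl h1
    · by_cases h2 : z ∈ closure C
      · exact absurd (hfr ⟨h2, h1⟩) (hDB z hz)
      · exact Or.inr h2
  by_contra hnot
  rw [Set.not_subset] at hnot
  obtain ⟨z, hzD, hzC⟩ := hnot
  have hzcl : z ∈ (closure C)ᶜ := (hsub hzD).resolve_left hzC
  obtain ⟨w, _, hw1, hw2⟩ := hD _ _ hC isClosed_closure.isOpen_compl hsub hDC ⟨z, hzD, hzcl⟩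
  exact hw2 (subset_closure hw1)

theorem IsGraphSpace.locallyConnectedSpace {G : Type*} [TopologicalSpace G] [T2Space G]
    (hG : IsGraphSpace G) : LocallyConnectedSpace G := by
  classical
  obtain ⟨n, f, hf, hcover, -⟩ := hG
  rw [locallyConnectedSpace_iff_connected_subsets]
  intro x U hU
  have hrange : ∀ i, IsClosed (Set.range (f i)) :=
    fun i => (isCompact_range (hf i).1).isClosed
  set N : Set G := (⋃ i ∈ {i : Fin n | x ∉ Set.range (f i)}, Set.range (f i))ᶜ with hN
  have hNopen : IsOpen N := by
    rw [hN, isOpen_compl_iff]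
    exact Set.Finite.isClosed_biUnion (Set.toFinite _) (fun i _ => hrange i)
  have hxN : x ∈ N := by
    rw [hN]
    simp only [Set.mem_compl_iff, Set.mem_iUnion]
    rintro ⟨i, hi, hxi⟩
    exact hi hxi
  have hUN : U ∩ N ∈ 𝓝 x := Filter.inter_mem hU (hNopen.mem_nhds hxN)
  have key : ∀ i : {i : Fin n // x ∈ Set.range (f i)}, ∃ W : Set G, x ∈ W ∧ W ⊆ U ∩ N ∧
      IsPreconnected W ∧ ∃ O : Set G, IsOpen O ∧ x ∈ O ∧ O ∩ Set.range (f i.1) ⊆ W := by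
    rintro ⟨i, hi⟩
    obtain ⟨t, ht⟩ := hi
    have hcont : Continuous (f i) := (hf i).1
    have hpre : (f i) ⁻¹' (U ∩ N) ∈ 𝓝 t := by
      have := hcont.continuousAt (x := t)
      exact this.preimage_mem_nhds (by rwa [ht])
    obtain ⟨t', htt'⟩ := t
    rw [nhds_subtype_eq_comap, Filter.mem_comap] at hpre
    obtain ⟨Uℝ, hUℝ, hUℝsub⟩ := hpre
    obtain ⟨ε, hε, hball⟩ := Metric.mem_nhds_iff.mp hUℝ
    set t : unitInterval := ⟨t', htt'⟩
    set J : Set unitInterval := Subtype.val ⁻¹' (Metric.ball t' ε) with hJ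
    have hJopen : IsOpen J := Metric.isOpen_ball.preimage continuous_subtype_val
    have htJ : t ∈ J := by simp [hJ, hε, t]
    have hJsub : J ⊆ (f i) ⁻¹' (U ∩ N) := fun s hs => hUℝsub (hball hs)
    have hJpre : IsPreconnected J := by
      have himg : Subtype.val '' J = Metric.ball t' ε ∩ unitInterval := by
        rw [hJ, Set.image_preimage_eq_inter_range, Subtype.range_val]
      refine IsInducing.subtypeVal.isPreconnected_image.mp ?_
      rw [himg, Real.ball_eq_Ioo]
      exact (Set.ordConnected_Ioo.inter
        (show OrdConnected unitInterval from Set.ordConnected_Icc)).isPreconnected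
    refine ⟨f i '' J, ⟨t, htJ, ht⟩, ?_, hJpre.image _ hcont.continuousOn, ?_⟩
    · rintro y ⟨s, hsJ, rfl⟩
      exact hJsub hsJ
    · have hK : IsCompact (Jᶜ : Set unitInterval) := hJopen.isClosed_compl.isCompact
      refine ⟨(f i '' Jᶜ)ᶜ, (hK.image hcont).isClosed.isOpen_compl, ?_, ?_⟩
      · simp only [Set.mem_compl_iff]
        rintro ⟨s, hsK, hsx⟩
        have hst : s = t := (hf i).2 (by rw [hsx, ht])
        exact hsK (hst ▸ htJ)
      · rintro y ⟨hyO, s, rfl⟩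
        by_cases hsJ : s ∈ J
        · exact ⟨s, hsJ, rfl⟩
        · exact absurd ⟨s, hsJ, rfl⟩ hyO
  choose W hxW hWsub hWpre O hOopen hxO hOsub using key
  refine ⟨⋃ i, W i, ?_, ?_, fun y hy => by
    obtain ⟨i, hi⟩ := Set.mem_iUnion.mp hy
    exact ((hWsub i) hi).1⟩
  · have hOall : IsOpen (N ∩ ⋂ i, O i) := hNopen.inter (isOpen_iInter_of_finite hOopen)
    refine mem_nhds_iff.mpr ⟨N ∩ ⋂ i, O i, ?_, hOall, ⟨hxN, Set.mem_iInter.mpr hxO⟩⟩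
    rintro y ⟨hyN, hyO⟩
    have hy : y ∈ ⋃ i, Set.range (f i) := by rw [hcover]; trivial
    obtain ⟨j, hj⟩ := Set.mem_iUnion.mp hy
    have hxj : x ∈ Set.range (f j) := by
      by_contra hxj
      exact hyN (Set.mem_biUnion hxj hj)
    exact Set.mem_iUnion.mpr ⟨⟨j, hxj⟩, hOsub ⟨j, hxj⟩ ⟨Set.mem_iInter.mp hyO _, hj⟩⟩
  · rw [← Set.sUnion_range]
    exact isPreconnected_sUnion x _ (by rintro s ⟨i, rfl⟩; exact hxW i)
      (by rintro s ⟨i, rfl⟩; exact hWpre i)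

/-- Key lemma: a component of `Aᶜ` with frontier inside `B` is disjoint from `A'`. -/
lemma aux_keyb {X : Type*} [TopologicalSpace X] [ConnectedSpace X] [LocallyConnectedSpace X]
    {A A' B V : Set X} (hAcl : IsClosed A) (hA'cl : IsClosed A')
    (hAne : A.Nonempty) (hBA' : B ⊆ A') (hBcl : IsClosed B)
    (hVo : IsOpen V) (hBV : B ⊆ V) (hAV : A ∩ V = A' ∩ V)
    (hcc' : ConsistentComplement A' B) {x : X} (hx : x ∉ A)
    (hfr : frontier (connectedComponentIn Aᶜ x) ⊆ B) :
    connectedComponentIn Aᶜ x ∩ A' = ∅ := by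
  set C := connectedComponentIn Aᶜ x with hCdef
  have hCo : IsOpen C := hAcl.isOpen_compl.connectedComponentIn
  have hCA : C ⊆ Aᶜ := connectedComponentIn_subset _ _
  have hxC : x ∈ C := mem_connectedComponentIn hx
  have hclC : closure C \ C ⊆ B := by
    intro z hz
    exact hfr (by rw [hCo.frontier_eq]; exact hz)
  by_contra hne
  have hW : (C ∩ A').Nonempty := Set.nonempty_iff_ne_empty.mpr hne
  have hWV : ∀ z, z ∈ C ∩ A' → z ∉ V := by
    intro z hz hzV
    have hzA : z ∈ A ∩ V := by rw [hAV]; exact ⟨hz.2, hzV⟩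
    exact hCA hz.1 hzA.1
  have hBC : ∀ b ∈ B, b ∉ C := fun b hb hbC => hWV b ⟨hbC, hBA' hb⟩ (hBV hb)
  have comp_in_C : ∀ z, z ∈ C → z ∉ A' → connectedComponentIn A'ᶜ z ⊆ C := by
    intro z hzC hzA'
    exact aux_subset_of_preconnected hCo hclC isPreconnected_connectedComponentIn
      (fun w hw hwB => (connectedComponentIn_subset A'ᶜ z) hw (hBA' hwB))
      ⟨z, mem_connectedComponentIn hzA', hzC⟩
  set S : Set X := {z | z ∈ C ∧ z ∉ A' ∧ frontier (connectedComponentIn A'ᶜ z) ∩ B = ∅}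
    with hSdef
  set T : Set X := (C ∩ A') ∪ S with hTdef
  have hTsubC : T ⊆ C := by
    rintro z (hz | hz)
    · exact hz.1
    · exact hz.1
  have hTopen : IsOpen T := by
    rw [isOpen_iff_forall_mem_open]
    rintro t (⟨htC, htA'⟩ | ⟨htC, htA', htfr⟩)
    · have htB : t ∉ B := fun hB => hWV t ⟨htC, htA'⟩ (hBV hB)
      have hNo : IsOpen (connectedComponentIn (C ∩ Bᶜ) t) :=
        (hCo.inter hBcl.isOpen_compl).connectedComponentIn
      have hNsub : connectedComponentIn (C ∩ Bᶜ) t ⊆ C ∩ Bᶜ := connectedComponentIn_subset _ _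
      have htN : t ∈ connectedComponentIn (C ∩ Bᶜ) t := mem_connectedComponentIn ⟨htC, htB⟩
      refine ⟨connectedComponentIn (C ∩ Bᶜ) t, ?_, hNo, htN⟩
      intro z hzN
      have hzC : z ∈ C := (hNsub hzN).1
      by_cases hzA' : z ∈ A'
      · exact Or.inl ⟨hzC, hzA'⟩
      · refine Or.inr ⟨hzC, hzA', ?_⟩
        rcases hcc' z hzA' with hsub | hempty
        · exfalso
          have hPo : IsOpen (connectedComponentIn A'ᶜ z) :=
            hA'cl.isOpen_compl.connectedComponentIn
          have hNP : connectedComponentIn (C ∩ Bᶜ) t ⊆ connectedComponentIn A'ᶜ z := by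
            refine aux_subset_of_preconnected hPo
              (fun w hw => hsub (by rw [hPo.frontier_eq]; exact hw))
              isPreconnected_connectedComponentIn (fun w hw hwB => (hNsub hw).2 hwB)
              ⟨z, hzN, mem_connectedComponentIn hzA'⟩
          exact ((connectedComponentIn_subset A'ᶜ z) (hNP htN)) htA'
        · exact hempty
    · refine ⟨connectedComponentIn A'ᶜ t, ?_, hA'cl.isOpen_compl.connectedComponentIn,
        mem_connectedComponentIn htA'⟩
      intro z hz
      have heq := connectedComponentIn_eq hz
      refine Or.inr ⟨comp_in_C t htC htA' hz, (connectedComponentIn_subset A'ᶜ t) hz, ?_⟩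
      rw [← heq]
      exact htfr
  have hTclosed : IsClosed T := by
    apply isClosed_of_closure_subset
    intro u hu
    by_cases huB : u ∈ B
    · exfalso
      have hNo : IsOpen (connectedComponentIn V u) := hVo.connectedComponentIn
      have huN : u ∈ connectedComponentIn V u := mem_connectedComponentIn (hBV huB)
      have hNV : connectedComponentIn V u ⊆ V := connectedComponentIn_subset _ _
      obtain ⟨s, hsN, hsT⟩ := mem_closure_iff.mp hu _ hNo huN
      rcases hsT with hsW | ⟨hsC, hsA', hsfr⟩
      · exact hWV s hsW (hNV hsN)
      · set P := connectedComponentIn A'ᶜ s with hPdef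
        have hPfr : frontier P ⊆ C ∩ A' := by
          intro w hw
          have hwA' : w ∈ A' := by
            have := aux_frontier_ccIn hA'cl.isOpen_compl s hw
            simpa using this
          have hwclC : w ∈ closure C :=
            closure_mono (comp_in_C s hsC hsA') (frontier_subset_closure hw)
          by_cases hwC : w ∈ C
          · exact ⟨hwC, hwA'⟩
          · exfalso
            have hwB : w ∈ B := hclC ⟨hwclC, hwC⟩
            have : w ∈ frontier P ∩ B := ⟨hw, hwB⟩
            rw [hsfr] at this
            exact this
        have h1 : (connectedComponentIn V u ∩ P).Nonempty :=
          ⟨s, hsN, mem_connectedComponentIn hsA'⟩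
        have h2 : (connectedComponentIn V u \ P).Nonempty :=
          ⟨u, huN, fun hP => (connectedComponentIn_subset A'ᶜ s hP) (hBA' huB)⟩
        obtain ⟨w, hwN, hwf⟩ :=
          aux_inter_frontier isPreconnected_connectedComponentIn h1 h2
        exact hWV w (hPfr hwf) (hNV hwN)
    · have huclC : u ∈ closure C := closure_mono hTsubC hu
      have huC : u ∈ C := by
        by_contra huC
        exact huB (hclC ⟨huclC, huC⟩)
      by_cases huA' : u ∈ A'
      · exact Or.inl ⟨huC, huA'⟩
      · have hPo : IsOpen (connectedComponentIn A'ᶜ u) := hA'cl.isOpen_compl.connectedComponentIn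
        obtain ⟨s, hsP, hsT⟩ := mem_closure_iff.mp hu _ hPo (mem_connectedComponentIn huA')
        rcases hsT with ⟨hsC, hsA'⟩ | ⟨hsC, hsA', hsfr⟩
        · exact absurd hsA' ((connectedComponentIn_subset A'ᶜ u) hsP)
        · have heq := connectedComponentIn_eq hsP
          exact Or.inr ⟨huC, huA', by rw [heq]; exact hsfr⟩
  have hclopen : IsClopen T := ⟨hTclosed, hTopen⟩
  rcases isClopen_iff.mp hclopen with hTe | hTu
  · obtain ⟨w, hw⟩ := hW
    have : w ∈ T := Or.inl hw
    rw [hTe] at this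
    exact this
  · have hCuniv : C ≠ univ := by
      intro h
      obtain ⟨a, ha⟩ := hAne
      exact hCA (h ▸ Set.mem_univ a) ha
    obtain ⟨b, hb⟩ := nonempty_frontier_iff.mpr ⟨⟨x, hxC⟩, hCuniv⟩
    have hbB : b ∈ B := hfr hb
    have hbT : b ∈ T := hTu ▸ Set.mem_univ b
    rcases hbT with hb' | hb'
    · exact hBC b hbB hb'.1
    · exact hBC b hbB hb'.1

lemma aux_sideSub {X : Type*} [TopologicalSpace X] [ConnectedSpace X] [LocallyConnectedSpace X]
    {A A' B V : Set X} (hAcl : IsClosed A) (hA'cl : IsClosed A')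
    (hAne : A.Nonempty) (hA'ne : A'.Nonempty) (hBA : B ⊆ A) (hBA' : B ⊆ A')
    (hBcl : IsClosed B) (hVo : IsOpen V) (hBV : B ⊆ V) (hAV : A ∩ V = A' ∩ V)
    (hcc : ConsistentComplement A B) (hcc' : ConsistentComplement A' B) :
    sideOf B A ⊆ sideOf B A' := by
  unfold sideOf
  apply closure_mono
  refine Set.iUnion₂_subset fun x hx => ?_
  obtain ⟨hxB, hxA⟩ := hx
  have hA'm : (connectedComponentIn Bᶜ x ∩ A').Nonempty := by
    by_contra hcon
    rw [Set.not_nonempty_iff_eq_empty] at hcon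
    obtain ⟨y, hyP, hyA⟩ := hxA
    have hyA' : y ∉ A' := by
      intro h
      have : y ∈ connectedComponentIn Bᶜ x ∩ A' := ⟨hyP, h⟩
      rw [hcon] at this
      exact this
    have hPD : connectedComponentIn Bᶜ x = connectedComponentIn A'ᶜ y := by
      apply Set.Subset.antisymm
      · refine IsPreconnected.subset_connectedComponentIn
          isPreconnected_connectedComponentIn hyP ?_
        intro z hz hzA'
        have : z ∈ connectedComponentIn Bᶜ x ∩ A' := ⟨hz, hzA'⟩
        rw [hcon] at this
        exact this
      · have h1 : connectedComponentIn A'ᶜ y ⊆ connectedComponentIn Bᶜ y :=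
          IsPreconnected.subset_connectedComponentIn isPreconnected_connectedComponentIn
            (mem_connectedComponentIn hyA')
            (fun z hz hzB => (connectedComponentIn_subset A'ᶜ y hz) (hBA' hzB))
        rw [connectedComponentIn_eq hyP]
        exact h1
    rcases hcc' y hyA' with hsub | hempty
    · have hkey := aux_keyb hA'cl hAcl hA'ne hBA hBcl hVo hBV hAV.symm hcc hyA' hsub
      have hy' : y ∈ connectedComponentIn A'ᶜ y ∩ A := ⟨mem_connectedComponentIn hyA', hyA⟩
      rw [hkey] at hy'
      exact hy'
    · have hfrP : frontier (connectedComponentIn Bᶜ x) ⊆ B := by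
        have := aux_frontier_ccIn hBcl.isOpen_compl x
        simpa using this
      have hfre : frontier (connectedComponentIn Bᶜ x) = ∅ := by
        ext z
        simp only [Set.mem_empty_iff_false, iff_false]
        intro hz
        have hz' : z ∈ frontier (connectedComponentIn A'ᶜ y) ∩ B := by
          rw [← hPD]
          exact ⟨hz, hfrP hz⟩
        rw [hempty] at hz'
        exact hz'
      have hclop : IsClopen (connectedComponentIn Bᶜ x) :=
        isClopen_iff_frontier_eq_empty.mpr hfre
      rcases isClopen_iff.mp hclop with he | huniv
      · rw [he] at hyP
        exact hyP
      · obtain ⟨a, ha⟩ := hA'ne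
        have : a ∈ connectedComponentIn Bᶜ x ∩ A' := ⟨huniv ▸ Set.mem_univ a, ha⟩
        rw [hcon] at this
        exact this
  have hmem : x ∈ {x : X | x ∉ B ∧ (connectedComponentIn Bᶜ x ∩ A').Nonempty} := ⟨hxB, hA'm⟩
  exact Set.subset_biUnion_of_mem (u := fun x => connectedComponentIn Bᶜ x) hmem

lemma aux_part2 {X : Type*} [TopologicalSpace X] [ConnectedSpace X] [LocallyConnectedSpace X]
    {A A' B V : Set X} (hAcl : IsClosed A) (hA'cl : IsClosed A')
    (hAne : A.Nonempty) (hA'ne : A'.Nonempty) (hBA : B ⊆ A) (hBA' : B ⊆ A')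
    (hBcl : IsClosed B) (hVo : IsOpen V) (hBV : B ⊆ V) (hAV : A ∩ V = A' ∩ V)
    (hcc : ConsistentComplement A B) (hcc' : ConsistentComplement A' B)
    {x : X} (hx : x ∉ A) (hclB : (closure (connectedComponentIn Aᶜ x) ∩ B).Nonempty) :
    connectedComponentIn Aᶜ x = connectedComponentIn A'ᶜ x := by
  obtain ⟨b, hbcl, hbB⟩ := hclB
  have hbC : b ∉ connectedComponentIn Aᶜ x :=
    fun h => (connectedComponentIn_subset Aᶜ x h) (hBA hbB)
  have hbfr : b ∈ frontier (connectedComponentIn Aᶜ x) := by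
    rw [(hAcl.isOpen_compl.connectedComponentIn).frontier_eq]
    exact ⟨hbcl, hbC⟩
  have hfrC : frontier (connectedComponentIn Aᶜ x) ⊆ B := by
    rcases hcc x hx with h | h
    · exact h
    · exfalso
      have hb' : b ∈ frontier (connectedComponentIn Aᶜ x) ∩ B := ⟨hbfr, hbB⟩
      rw [h] at hb'
      exact hb'
  have h1 := aux_keyb hAcl hA'cl hAne hBA' hBcl hVo hBV hAV hcc' hx hfrC
  have hx' : x ∉ A' := by
    intro h
    have : x ∈ connectedComponentIn Aᶜ x ∩ A' := ⟨mem_connectedComponentIn hx, h⟩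
    rw [h1] at this
    exact this
  have hCC' : connectedComponentIn Aᶜ x ⊆ connectedComponentIn A'ᶜ x := by
    refine IsPreconnected.subset_connectedComponentIn isPreconnected_connectedComponentIn
      (mem_connectedComponentIn hx) ?_
    intro z hz hzA'
    have : z ∈ connectedComponentIn Aᶜ x ∩ A' := ⟨hz, hzA'⟩
    rw [h1] at this
    exact this
  have hbC' : b ∉ connectedComponentIn A'ᶜ x :=
    fun h => (connectedComponentIn_subset A'ᶜ x h) (hBA' hbB)
  have hbfr' : b ∈ frontier (connectedComponentIn A'ᶜ x) := by
    rw [(hA'cl.isOpen_compl.connectedComponentIn).frontier_eq]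
    exact ⟨closure_mono hCC' hbcl, hbC'⟩
  have hfrC' : frontier (connectedComponentIn A'ᶜ x) ⊆ B := by
    rcases hcc' x hx' with h | h
    · exact h
    · exfalso
      have hb' : b ∈ frontier (connectedComponentIn A'ᶜ x) ∩ B := ⟨hbfr', hbB⟩
      rw [h] at hb'
      exact hb'
  have h2 := aux_keyb hA'cl hAcl hA'ne hBA hBcl hVo hBV hAV.symm hcc hx' hfrC'
  have hC'C : connectedComponentIn A'ᶜ x ⊆ connectedComponentIn Aᶜ x := by
    refine IsPreconnected.subset_connectedComponentIn isPreconnected_connectedComponentIn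
      (mem_connectedComponentIn hx') ?_
    intro z hz hzA
    have : z ∈ connectedComponentIn A'ᶜ x ∩ A := ⟨hz, hzA⟩
    rw [h2] at this
    exact this
  exact Set.Subset.antisymm hCC' hC'C

/-- sides agree for regular sets with consistent complements agreeing near B. -/
theorem stmt6 (G : Type*) [TopologicalSpace G] [CompactSpace G] [T2Space G]
    [ConnectedSpace G] (hG : IsGraphSpace G)
    (A A' B : Set G)
    (hA : IsRegularSet A) (hA' : IsRegularSet A')
    (hAne : A.Nonempty) (hA'ne : A'.Nonempty)
    (hB : B ⊆ frontier A ∩ frontier A') (hBfin : B.Finite)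
    (hcc : ConsistentComplement A B) (hcc' : ConsistentComplement A' B)
    (hV : ∃ V : Set G, IsOpen V ∧ B ⊆ V ∧ A ∩ V = A' ∩ V) :
    sideOf B A = sideOf B A' ∧
    ∀ x, x ∉ A → (closure (connectedComponentIn Aᶜ x) ∩ B).Nonempty →
      connectedComponentIn Aᶜ x = connectedComponentIn A'ᶜ x := by
  have hLC : LocallyConnectedSpace G := hG.locallyConnectedSpace
  obtain ⟨V, hVo, hBV, hAV⟩ := hV
  have hAcl : IsClosed A := hA.1
  have hA'cl : IsClosed A' := hA'.1
  have hBA : B ⊆ A := fun b hb => hAcl.frontier_subset (hB hb).1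
  have hBA' : B ⊆ A' := fun b hb => hA'cl.frontier_subset (hB hb).2
  have hBcl : IsClosed B := hBfin.isClosed
  constructor
  · exact Set.Subset.antisymm
      (aux_sideSub hAcl hA'cl hAne hA'ne hBA hBA' hBcl hVo hBV hAV hcc hcc')
      (aux_sideSub hA'cl hAcl hA'ne hAne hBA' hBA hBcl hVo hBV hAV.symm hcc' hcc)
  · intro x hx hclB
    exact aux_part2 hAcl hA'cl hAne hA'ne hBA hBA' hBcl hVo hBV hAV hcc hcc' hx hclB
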